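/- For every integer n ≥ 2 and every real u with 0 < u < 2, the sum over integers l with n/2 < l ≤ n − 1 of (2n)! / ((2n−2l)!·(2l)!) · (u/n)^{2n−2l} · (1 − u/n)^{2l} is at most 4·u². -/

import Mathlib

theorem stmt_3 (n : ℕ) (hn : 2 ≤ n) (u : ℝ) (hu0 : 0 < u) (hu2 : u < 2) :
    ∑ l ∈ Finset.Ioc (n / 2) (n - 1),
        ((Nat.factorial (2 * n) : ℝ) /
          ((Nat.factorial (2 * n - 2 * l)) * (Nat.factorial (2 * l)))) *
        (u / n) ^ (2 * n - 2 * l) * (1 - u / n) ^ (2 * l)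
      ≤ 4 * u ^ 2 := by
  set x : ℝ := u / n with hxdef
  set y : ℝ := 1 - u / n with hydef
  have hn0 : (0:ℝ) < n := by positivity
  have hx0 : 0 ≤ x := by positivity
  have hxlt : x < 1 := by
    rw [hxdef, div_lt_one hn0]
    calc u < 2 := hu2
    _ ≤ n := by exact_mod_cast hn
  have hy0 : 0 ≤ y := by simp [hydef]; linarith [hxlt]
  have hxy : x + y = 1 := by ring
  -- each coefficient is a binomial coefficient
  have hcoef : ∀ l ∈ Finset.Ioc (n / 2) (n - 1),
      ((Nat.factorial (2 * n) : ℝ) /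
        ((Nat.factorial (2 * n - 2 * l)) * (Nat.factorial (2 * l))))
      = ((2*n).choose (2*l) : ℝ) := by
    intro l hl
    simp only [Finset.mem_Ioc] at hl
    have h2l : 2*l ≤ 2*n := by omega
    rw [Nat.cast_choose ℝ h2l]; ring
  have key : ∀ l ∈ Finset.Ioc (n / 2) (n - 1),
      ((2*n).choose (2*l) : ℝ) * x ^ (2 * n - 2 * l) * y ^ (2 * l)
      ≤ ((2*n).choose 2 : ℝ) * x ^ 2 *
        (((2*n-2).choose (2*l) : ℝ) * x ^ (2 * n - 2 - 2 * l) * y ^ (2 * l)) := by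
    intro l hl
    simp only [Finset.mem_Ioc] at hl
    have h2 : 2 ≤ 2*n - 2*l := by omega
    have hchoose : (2*n).choose (2*l) ≤ (2*n).choose 2 * (2*n-2).choose (2*l) := by
      have := Nat.choose_mul (n := 2*n) (k := 2*n - 2*l) (s := 2) (by omega)
      have hsymm : (2*n).choose (2*n - 2*l) = (2*n).choose (2*l) :=
        Nat.choose_symm (by omega)
      have hsymm2 : (2*n - 2).choose (2*n - 2*l - 2) = (2*n-2).choose (2*l) := by
        rw [show 2*n - 2*l - 2 = (2*n-2) - 2*l by omega]
        exact Nat.choose_symm (by omega)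
      rw [hsymm, hsymm2] at this
      calc (2*n).choose (2*l) = (2*n).choose (2*l) * 1 := by ring
      _ ≤ (2*n).choose (2*l) * (2*n - 2*l).choose 2 := by
          apply Nat.mul_le_mul_left
          exact Nat.choose_pos h2
      _ = (2*n).choose 2 * (2*n-2).choose (2*l) := this
    have hpow : x ^ (2 * n - 2 * l) = x ^ 2 * x ^ (2*n - 2 - 2*l) := by
      rw [← pow_add]; congr 1; omega
    rw [hpow]
    have hc : ((2*n).choose (2*l) : ℝ) ≤ ((2*n).choose 2 : ℝ) * ((2*n-2).choose (2*l) : ℝ) := by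
      have := (Nat.cast_le (α := ℝ)).mpr hchoose
      push_cast at this
      exact this
    have hpos : 0 ≤ x ^ 2 * x ^ (2*n - 2 - 2*l) * y ^ (2*l) := by positivity
    nlinarith [mul_le_mul_of_nonneg_right hc hpos, (by positivity : (0:ℝ) ≤ ((2*n).choose (2*l) : ℝ))]
  have hsub : ∑ l ∈ Finset.Ioc (n / 2) (n - 1),
      ((2*n-2).choose (2*l) : ℝ) * x ^ (2 * n - 2 - 2 * l) * y ^ (2 * l) ≤ 1 := by
    have hinj : ∀ a ∈ Finset.Ioc (n / 2) (n - 1), ∀ b ∈ Finset.Ioc (n / 2) (n - 1),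
        2*a = 2*b → a = b := by intro a _ b _ h; omega
    have himage : ∑ l ∈ Finset.Ioc (n / 2) (n - 1),
        ((2*n-2).choose (2*l) : ℝ) * x ^ (2 * n - 2 - 2 * l) * y ^ (2 * l)
        = ∑ j ∈ (Finset.Ioc (n / 2) (n - 1)).image (fun l => 2*l),
          ((2*n-2).choose j : ℝ) * x ^ (2 * n - 2 - j) * y ^ j := by
      rw [Finset.sum_image hinj]
    rw [himage]
    have hfull : ∑ j ∈ Finset.range (2*n - 1),
        ((2*n-2).choose j : ℝ) * x ^ (2 * n - 2 - j) * y ^ j = 1 := by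
      calc ∑ j ∈ Finset.range (2*n - 1),
            ((2*n-2).choose j : ℝ) * x ^ (2 * n - 2 - j) * y ^ j
          = ∑ j ∈ Finset.range ((2*n - 2) + 1),
            y ^ j * x ^ (2 * n - 2 - j) * ((2*n-2).choose j : ℝ) := by
            rw [show 2*n - 1 = (2*n-2) + 1 by omega]
            exact Finset.sum_congr rfl fun j _ => by ring
        _ = (y + x) ^ (2*n-2) := (add_pow y x (2*n-2)).symm
        _ = 1 := by rw [show y + x = 1 by linarith [hxy], one_pow]
    rw [← hfull]
    apply Finset.sum_le_sum_of_subset_of_nonneg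
    · intro j hj
      simp only [Finset.mem_image, Finset.mem_Ioc] at hj
      obtain ⟨l, ⟨h1, h2⟩, rfl⟩ := hj
      simp only [Finset.mem_range]
      omega
    · intro j _ _
      positivity
  have hC2 : ((2*n).choose 2 : ℝ) = n * (2*n - 1) := by
    rw [Nat.choose_two_right]
    have : 2*n*(2*n-1)/2 = n * (2*n-1) := by
      rw [show 2*n*(2*n-1) = 2*(n*(2*n-1)) by ring, Nat.mul_div_cancel_left _ (by norm_num)]
    rw [this]
    push_cast [show 1 ≤ 2*n by omega]
    ring
  calc ∑ l ∈ Finset.Ioc (n / 2) (n - 1),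
        ((Nat.factorial (2 * n) : ℝ) /
          ((Nat.factorial (2 * n - 2 * l)) * (Nat.factorial (2 * l)))) *
        x ^ (2 * n - 2 * l) * y ^ (2 * l)
      = ∑ l ∈ Finset.Ioc (n / 2) (n - 1),
        ((2*n).choose (2*l) : ℝ) * x ^ (2 * n - 2 * l) * y ^ (2 * l) := by
        apply Finset.sum_congr rfl; intro l hl; rw [hcoef l hl]
    _ ≤ ∑ l ∈ Finset.Ioc (n / 2) (n - 1),
        ((2*n).choose 2 : ℝ) * x ^ 2 *
          (((2*n-2).choose (2*l) : ℝ) * x ^ (2 * n - 2 - 2 * l) * y ^ (2 * l)) :=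
        Finset.sum_le_sum key
    _ = ((2*n).choose 2 : ℝ) * x ^ 2 * ∑ l ∈ Finset.Ioc (n / 2) (n - 1),
          ((2*n-2).choose (2*l) : ℝ) * x ^ (2 * n - 2 - 2 * l) * y ^ (2 * l) := by
        rw [Finset.mul_sum]
    _ ≤ ((2*n).choose 2 : ℝ) * x ^ 2 * 1 := by
        apply mul_le_mul_of_nonneg_left hsub; positivity
    _ ≤ 4 * u ^ 2 := by
        rw [mul_one, hC2, hxdef]
        rw [div_pow]
        rw [show (n:ℝ) * (2*n - 1) * (u^2 / (n:ℝ)^2) = (2*n-1)/n * u^2 by field_simp]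
        have h1 : (2*(n:ℝ) - 1)/n ≤ 2 := by
          rw [div_le_iff₀ hn0]; linarith
        nlinarith [sq_nonneg u]
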